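/- Let n, d ≥ 1, let U_i, V_i ∈ ℝ^{d×d} (1 ≤ i ≤ n) satisfy Assumption 2 with Q ∈ ℝ^{dn×dn} the associated block-factorizable matrix, and let a ∈ ℝ^{dn} and c ∈ ℝ^n. Call a pair (x, z) with x ∈ ℝ^{dn} and z ∈ {0,1}^n feasible if for every i ∈ {1,…,n}, z_i = 0 implies x_{[i]} = 0 (where x_{[i]} ∈ ℝ^d is the i-th block of x). Then the infimum of xᵀ Q x + aᵀ x + Σ_{i=1}^n c_i z_i over feasible (x, z) is attained, and it equals the minimum over all subsets S = {t_1 < t_2 < … < t_k} of {1,…,n} (with t_{k+1} := n+1, and with value 0 for S = ∅) of Σ_{ℓ=1}^{k} ( c_{t_ℓ} − (1/4) aᵀ Λ_{[t_ℓ → t_{ℓ+1}]} a ). -/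

import Mathlib

open Matrix BigOperators
open scoped Classical

/-- The block-factorizable matrix with `(i,j)`-th `d×d` block `U_i V_jᵀ` for `i ≤ j`
and `V_i U_jᵀ` for `i > j`. -/
noncomputable def blockQ (n d : ℕ) (U V : Fin n → Matrix (Fin d) (Fin d) ℝ) :
    Matrix (Fin n × Fin d) (Fin n × Fin d) ℝ :=
  Matrix.of fun p q =>
    if p.1 ≤ q.1 then (U p.1 * (V q.1)ᵀ) p.2 q.2 else (V p.1 * (U q.1)ᵀ) p.2 q.2

/-- Assumption 2. -/
def Assumption2 (n d : ℕ) (U V : Fin n → Matrix (Fin d) (Fin d) ℝ) : Prop :=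
  (∀ i : Fin n, (U i * (V i)ᵀ).PosDef) ∧
    ∀ i j : Fin n, i < j → (U i * (V i)ᵀ - U i * (U j)⁻¹ * V j * (U i)ᵀ).PosDef

/-- `E_i`, the `dn×d` block column matrix whose `i`-th block is the identity. -/
def Emat (n d : ℕ) (i : Fin n) : Matrix (Fin n × Fin d) (Fin d) ℝ :=
  Matrix.of fun p b => if p.1 = i ∧ p.2 = b then 1 else 0

/-- `Λ_{[i→j]}` for `1 ≤ i < j ≤ n`. -/
noncomputable def BLamMid (n d : ℕ) (U V : Fin n → Matrix (Fin d) (Fin d) ℝ) (i j : Fin n) :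
    Matrix (Fin n × Fin d) (Fin n × Fin d) ℝ :=
  (Emat n d i - Emat n d j * ((U j)ᵀ)⁻¹ * (U i)ᵀ) *
    (U i * (V i)ᵀ - U i * (U j)⁻¹ * V j * (U i)ᵀ)⁻¹ *
    (Emat n d i - Emat n d j * ((U j)ᵀ)⁻¹ * (U i)ᵀ)ᵀ

/-- `Λ_{[i→n+1]} = E_i (U_i V_iᵀ)⁻¹ E_iᵀ`. -/
noncomputable def BLamEnd (n d : ℕ) (U V : Fin n → Matrix (Fin d) (Fin d) ℝ) (i : Fin n) :
    Matrix (Fin n × Fin d) (Fin n × Fin d) ℝ :=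
  Emat n d i * (U i * (V i)ᵀ)⁻¹ * (Emat n d i)ᵀ

/-- For `S = {t_1 < … < t_k}` (with `t_{k+1} := n+1`), the sum
`Σ_{ℓ=1}^{k} (c_{t_ℓ} − (1/4) aᵀ Λ_{[t_ℓ → t_{ℓ+1}]} a)`: each `i ∈ S` is paired with the
next element of `S` if one exists, and with `n+1` otherwise. Empty `S` gives `0`. -/
noncomputable def subsetCost (n d : ℕ) (U V : Fin n → Matrix (Fin d) (Fin d) ℝ)
    (a : Fin n × Fin d → ℝ) (c : Fin n → ℝ) (S : Finset (Fin n)) : ℝ :=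
  ∑ i ∈ S,
    if h : (S.filter fun j => i < j).Nonempty then
      c i - (1 / 4) * (a ⬝ᵥ (BLamMid n d U V i ((S.filter fun j => i < j).min' h) *ᵥ a))
    else
      c i - (1 / 4) * (a ⬝ᵥ (BLamEnd n d U V i *ᵥ a))

variable {n d : ℕ}

variable {n d : ℕ}

lemma mul_Emat {α : Type*} [Fintype α] (A : Matrix α (Fin n × Fin d) ℝ) (j : Fin n) (p : α) (b : Fin d) :
    (A * Emat n d j) p b = A p (j, b) := by
  simp only [Matrix.mul_apply, Emat, Matrix.of_apply]
  rw [Fintype.sum_prod_type]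
  simp [Finset.sum_ite_eq', ite_and]

lemma Emat_tmul {α : Type*} [Fintype α] (A : Matrix (Fin n × Fin d) α ℝ) (i : Fin n) (b : Fin d) (q : α) :
    ((Emat n d i)ᵀ * A) b q = A (i, b) q := by
  simp only [Matrix.mul_apply, Emat, Matrix.transpose_apply, Matrix.of_apply]
  rw [Fintype.sum_prod_type]
  simp [Finset.sum_ite_eq, ite_and, @eq_comm _ b]

lemma smul_Emat {α : Type*} [Fintype α] (B : Matrix (Fin d) α ℝ) (i : Fin n) (p : Fin n × Fin d) (q : α) :
    (Emat n d i * B) p q = if p.1 = i then B p.2 q else 0 := by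
  simp only [Matrix.mul_apply, Emat, Matrix.of_apply]
  simp [ite_and]

lemma EQE (U V : Fin n → Matrix (Fin d) (Fin d) ℝ) (i j : Fin n) :
    (Emat n d i)ᵀ * blockQ n d U V * Emat n d j =
      if i ≤ j then U i * (V j)ᵀ else V i * (U j)ᵀ := by
  ext b b'
  rw [mul_Emat, Emat_tmul]
  by_cases h : i ≤ j <;> simp [blockQ, h]

section A2
variable {U V : Fin n → Matrix (Fin d) (Fin d) ℝ}

lemma hUdet (hA : Assumption2 n d U V) (i : Fin n) : IsUnit (U i).det := by
  have h := (hA.1 i).det_pos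
  rw [Matrix.det_mul] at h
  exact isUnit_iff_ne_zero.mpr (by intro h0; rw [h0] at h; simpa using h)

lemma hVdet (hA : Assumption2 n d U V) (i : Fin n) : IsUnit (V i).det := by
  have h := (hA.1 i).det_pos
  rw [Matrix.det_mul, Matrix.det_transpose] at h
  exact isUnit_iff_ne_zero.mpr (by intro h0; rw [h0] at h; simpa using h)

lemma symUV (hA : Assumption2 n d U V) (i : Fin n) : V i * (U i)ᵀ = U i * (V i)ᵀ := by
  have h := (hA.1 i).isHermitian
  calc V i * (U i)ᵀ = (U i * (V i)ᵀ)ᵀ := by rw [Matrix.transpose_mul, Matrix.transpose_transpose]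
  _ = U i * (V i)ᵀ := h

/-- `(U i V iᵀ)⁻¹ * V i = ((U i)ᵀ)⁻¹`. -/
lemma invUV_V (hA : Assumption2 n d U V) (i : Fin n) : (U i * (V i)ᵀ)⁻¹ * V i = ((U i)ᵀ)⁻¹ := by
  rw [← symUV hA i, Matrix.mul_inv_rev, Matrix.mul_assoc,
    Matrix.nonsing_inv_mul _ (hVdet hA i), Matrix.mul_one]

/-- `(U j)⁻¹ * V j = (V j)ᵀ * ((U j)ᵀ)⁻¹`. -/
lemma invU_V (hA : Assumption2 n d U V) (j : Fin n) : (U j)⁻¹ * V j = (V j)ᵀ * ((U j)ᵀ)⁻¹ := by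
  have h := symUV hA j
  have hu := hUdet hA j
  have : V j = (U j) * (V j)ᵀ * ((U j)ᵀ)⁻¹ := by
    rw [← h, Matrix.mul_assoc, Matrix.mul_nonsing_inv _ (by rwa [Matrix.det_transpose]), Matrix.mul_one]
  nth_rewrite 1 [this]
  rw [← Matrix.mul_assoc, ← Matrix.mul_assoc, Matrix.nonsing_inv_mul _ hu, Matrix.one_mul]
end A2

section A2b
variable {U V : Fin n → Matrix (Fin d) (Fin d) ℝ}

lemma FtQE (i j' j : Fin n) :
    (Emat n d i - Emat n d j' * ((U j')ᵀ)⁻¹ * (U i)ᵀ)ᵀ * blockQ n d U V * Emat n d j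
      = (if i ≤ j then U i * (V j)ᵀ else V i * (U j)ᵀ)
        - U i * ((U j')⁻¹ * (if j' ≤ j then U j' * (V j)ᵀ else V j' * (U j)ᵀ)) := by
  rw [Matrix.transpose_sub, Matrix.sub_mul, Matrix.sub_mul, EQE]
  have h1 : (Emat n d j' * ((U j')ᵀ)⁻¹ * (U i)ᵀ)ᵀ
      = U i * ((U j')⁻¹ * (Emat n d j')ᵀ) := by
    rw [Matrix.transpose_mul, Matrix.transpose_mul, Matrix.transpose_transpose,
      Matrix.transpose_nonsing_inv, Matrix.transpose_transpose]
  rw [h1]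
  congr 1
  have h2 := EQE U V j' j
  rw [Matrix.mul_assoc] at h2
  simp only [Matrix.mul_assoc, h2]

lemma midQE_gt (hA : Assumption2 n d U V) {i j' j : Fin n} (h1 : i < j') (h2 : j' ≤ j) :
    BLamMid n d U V i j' * blockQ n d U V * Emat n d j = 0 := by
  rw [BLamMid, Matrix.mul_assoc _ _ (blockQ n d U V), Matrix.mul_assoc _ _ (Emat n d j), FtQE]
  rw [if_pos (le_of_lt (lt_of_lt_of_le h1 h2)), if_pos h2,
    Matrix.nonsing_inv_mul_cancel_left _ _ (hUdet hA j'), sub_self, Matrix.mul_zero]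

lemma midQE_eq (hA : Assumption2 n d U V) {i j' : Fin n} (h1 : i < j') :
    BLamMid n d U V i j' * blockQ n d U V * Emat n d i
      = Emat n d i - Emat n d j' * ((U j')ᵀ)⁻¹ * (U i)ᵀ := by
  have hBdet : IsUnit (U i * (V i)ᵀ - U i * (U j')⁻¹ * V j' * (U i)ᵀ).det :=
    isUnit_iff_ne_zero.mpr (ne_of_gt (hA.2 i j' h1).det_pos)
  rw [BLamMid, Matrix.mul_assoc _ _ (blockQ n d U V), Matrix.mul_assoc _ _ (Emat n d i), FtQE]
  rw [if_pos (le_refl i), if_neg (not_le.mpr h1)]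
  have hBe : U i * (V i)ᵀ - U i * ((U j')⁻¹ * (V j' * (U i)ᵀ))
      = U i * (V i)ᵀ - U i * (U j')⁻¹ * V j' * (U i)ᵀ := by
    simp only [Matrix.mul_assoc]
  rw [hBe, Matrix.mul_assoc, Matrix.nonsing_inv_mul _ hBdet, Matrix.mul_one]

lemma midQE_lt (hA : Assumption2 n d U V) {i j' j : Fin n} (h1 : i < j') (h2 : j < i) :
    BLamMid n d U V i j' * blockQ n d U V * Emat n d j
      = Emat n d i * (((U i)ᵀ)⁻¹ * (U j)ᵀ)
        - Emat n d j' * ((U j')ᵀ)⁻¹ * (U i)ᵀ * (((U i)ᵀ)⁻¹ * (U j)ᵀ) := by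
  have hBdet : IsUnit (U i * (V i)ᵀ - U i * (U j')⁻¹ * V j' * (U i)ᵀ).det :=
    isUnit_iff_ne_zero.mpr (ne_of_gt (hA.2 i j' h1).det_pos)
  have hUiT : IsUnit ((U i)ᵀ).det := by
    rw [Matrix.det_transpose]; exact hUdet hA i
  rw [BLamMid, Matrix.mul_assoc _ _ (blockQ n d U V), Matrix.mul_assoc _ _ (Emat n d j), FtQE]
  rw [if_neg (not_le.mpr h2), if_neg (not_le.mpr (lt_trans h2 h1))]
  have key : V i * (U j)ᵀ - U i * ((U j')⁻¹ * (V j' * (U j)ᵀ))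
      = (U i * (V i)ᵀ - U i * (U j')⁻¹ * V j' * (U i)ᵀ) * (((U i)ᵀ)⁻¹ * (U j)ᵀ) := by
    rw [Matrix.sub_mul]
    congr 1
    · rw [← symUV hA i, Matrix.mul_assoc, Matrix.mul_nonsing_inv_cancel_left _ _ hUiT]
    · simp only [Matrix.mul_assoc]
      rw [Matrix.mul_nonsing_inv_cancel_left _ _ hUiT]
  rw [key, Matrix.mul_assoc _ _ ((U i * (V i)ᵀ - U i * (U j')⁻¹ * V j' * (U i)ᵀ) * (((U i)ᵀ)⁻¹ * (U j)ᵀ)),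
    Matrix.nonsing_inv_mul_cancel_left _ _ hBdet, Matrix.sub_mul]

lemma endQE_eq (hA : Assumption2 n d U V) (i : Fin n) :
    BLamEnd n d U V i * blockQ n d U V * Emat n d i = Emat n d i := by
  rw [BLamEnd, Matrix.mul_assoc _ _ (blockQ n d U V), Matrix.mul_assoc _ _ (Emat n d i)]
  rw [EQE, if_pos (le_refl i), Matrix.mul_assoc,
    Matrix.nonsing_inv_mul _ (isUnit_iff_ne_zero.mpr (ne_of_gt (hA.1 i).det_pos)), Matrix.mul_one]

lemma endQE_lt (hA : Assumption2 n d U V) {i j : Fin n} (h2 : j < i) :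
    BLamEnd n d U V i * blockQ n d U V * Emat n d j
      = Emat n d i * (((U i)ᵀ)⁻¹ * (U j)ᵀ) := by
  rw [BLamEnd, Matrix.mul_assoc _ _ (blockQ n d U V), Matrix.mul_assoc _ _ (Emat n d j)]
  rw [EQE, if_neg (not_le.mpr h2), Matrix.mul_assoc]
  congr 1
  rw [← Matrix.mul_assoc, invUV_V hA i]
end A2b

noncomputable def LamS (U V : Fin n → Matrix (Fin d) (Fin d) ℝ) (S : Finset (Fin n)) (i : Fin n) :
    Matrix (Fin n × Fin d) (Fin n × Fin d) ℝ :=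
  if h : (S.filter fun j => i < j).Nonempty then
    BLamMid n d U V i ((S.filter fun j => i < j).min' h)
  else BLamEnd n d U V i

noncomputable def Lmat (U V : Fin n → Matrix (Fin d) (Fin d) ℝ) (S : Finset (Fin n)) :
    Matrix (Fin n × Fin d) (Fin n × Fin d) ℝ :=
  ∑ i ∈ S, LamS U V S i

noncomputable def gmat (U : Fin n → Matrix (Fin d) (Fin d) ℝ) (j m : Fin n) :
    Matrix (Fin n × Fin d) (Fin d) ℝ :=
  Emat n d m * (((U m)ᵀ)⁻¹ * (U j)ᵀ)

noncomputable def nxtF (S : Finset (Fin n)) (i : Fin n) : Fin n :=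
  if h : (S.filter fun m => i < m).Nonempty then (S.filter fun m => i < m).min' h else i

noncomputable def prvF (S : Finset (Fin n)) (m : Fin n) : Fin n :=
  if h : (S.filter fun i => i < m).Nonempty then (S.filter fun i => i < m).max' h else m

section Tele
variable {U V : Fin n → Matrix (Fin d) (Fin d) ℝ}

lemma LQ_E (hA : Assumption2 n d U V) {S : Finset (Fin n)} {j : Fin n} (hj : j ∈ S) :
    Lmat U V S * blockQ n d U V * Emat n d j = Emat n d j := by
  have hterm : ∀ i ∈ S, LamS U V S i * blockQ n d U V * Emat n d j
      = (if j ≤ i then (if i = j then Emat n d j else gmat U j i) else 0)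
        - (if j ≤ i ∧ (S.filter fun m => i < m).Nonempty then gmat U j (nxtF S i) else 0) := by
    intro i _
    rcases lt_trichotomy i j with hij | rfl | hij
    · have hne : (S.filter fun m => i < m).Nonempty :=
        ⟨j, Finset.mem_filter.mpr ⟨hj, hij⟩⟩
      have hle : (S.filter fun m => i < m).min' hne ≤ j :=
        Finset.min'_le _ _ (Finset.mem_filter.mpr ⟨hj, hij⟩)
      have hlt : i < (S.filter fun m => i < m).min' hne :=
        (Finset.mem_filter.mp (Finset.min'_mem _ hne)).2
      rw [LamS, dif_pos hne, midQE_gt hA hlt hle, if_neg (not_le.mpr hij),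
        if_neg (fun h => (not_le.mpr hij) h.1), sub_zero]
    · by_cases hne : (S.filter fun m => i < m).Nonempty
      · have hlt : i < (S.filter fun m => i < m).min' hne :=
          (Finset.mem_filter.mp (Finset.min'_mem _ hne)).2
        rw [LamS, dif_pos hne, midQE_eq hA hlt, if_pos (le_refl i), if_pos rfl,
          if_pos ⟨le_refl i, hne⟩]
        congr 1
        rw [gmat, nxtF, dif_pos hne, Matrix.mul_assoc]
      · rw [LamS, dif_neg hne, endQE_eq hA, if_pos (le_refl i), if_pos rfl,
          if_neg (fun h => hne h.2), sub_zero]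
    · have hUiT : IsUnit ((U i)ᵀ).det := by
        rw [Matrix.det_transpose]; exact hUdet hA i
      by_cases hne : (S.filter fun m => i < m).Nonempty
      · have hlt : i < (S.filter fun m => i < m).min' hne :=
          (Finset.mem_filter.mp (Finset.min'_mem _ hne)).2
        rw [LamS, dif_pos hne, midQE_lt hA hlt hij, if_pos (le_of_lt hij),
          if_neg (ne_of_gt hij), if_pos ⟨le_of_lt hij, hne⟩]
        congr 1
        rw [gmat, nxtF, dif_pos hne]
        simp only [Matrix.mul_assoc]
        rw [Matrix.mul_nonsing_inv_cancel_left _ _ hUiT]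
      · rw [LamS, dif_neg hne, endQE_lt hA hij, if_pos (le_of_lt hij),
          if_neg (ne_of_gt hij), if_neg (fun h => hne h.2), sub_zero, gmat]
  rw [Lmat, Matrix.sum_mul, Matrix.sum_mul, Finset.sum_congr rfl hterm,
    Finset.sum_sub_distrib]
  have hA1 : ∑ i ∈ S, (if j ≤ i then (if i = j then Emat n d j else gmat U j i) else 0)
      = Emat n d j + ∑ m ∈ S.filter (fun m => j < m), gmat U j m := by
    rw [← Finset.sum_filter]
    have hsplit : S.filter (fun i => j ≤ i) = insert j (S.filter (fun m => j < m)) := by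
      ext x
      simp only [Finset.mem_filter, Finset.mem_insert]
      constructor
      · rintro ⟨hx, hle⟩
        rcases eq_or_lt_of_le hle with h | h
        · exact Or.inl h.symm
        · exact Or.inr ⟨hx, h⟩
      · rintro (rfl | ⟨hx, hlt⟩)
        · exact ⟨hj, le_refl _⟩
        · exact ⟨hx, le_of_lt hlt⟩
    rw [hsplit, Finset.sum_insert (by simp)]
    congr 1
    · rw [if_pos rfl]
    · apply Finset.sum_congr rfl
      intro m hm
      rw [if_neg (ne_of_gt (Finset.mem_filter.mp hm).2)]
  have hA2 : ∑ i ∈ S, (if j ≤ i ∧ (S.filter fun m => i < m).Nonempty then gmat U j (nxtF S i) else 0)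
      = ∑ m ∈ S.filter (fun m => j < m), gmat U j m := by
    rw [← Finset.sum_filter]
    refine Finset.sum_nbij' (nxtF S) (prvF S) ?_ ?_ ?_ ?_ ?_
    · intro i hi
      have hfl := Finset.mem_filter.mp hi
      have hiS := hfl.1
      have hji := hfl.2.1
      have hne := hfl.2.2
      have hmem := Finset.min'_mem _ hne
      rw [nxtF, dif_pos hne]
      refine Finset.mem_filter.mpr ⟨(Finset.mem_filter.mp hmem).1,
        lt_of_le_of_lt hji (Finset.mem_filter.mp hmem).2⟩
    · intro m hm
      obtain ⟨hmS, hjm⟩ := Finset.mem_filter.mp hm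
      have hne : (S.filter fun i => i < m).Nonempty := ⟨j, Finset.mem_filter.mpr ⟨hj, hjm⟩⟩
      have hmem := Finset.max'_mem _ hne
      have hjle : j ≤ (S.filter fun i => i < m).max' hne :=
        Finset.le_max' (S.filter fun i => i < m) j (Finset.mem_filter.mpr (by exact ⟨hj, hjm⟩))
      rw [prvF, dif_pos hne]
      exact Finset.mem_filter.mpr ⟨(Finset.mem_filter.mp hmem).1, hjle,
        ⟨m, Finset.mem_filter.mpr ⟨hmS, (Finset.mem_filter.mp hmem).2⟩⟩⟩
    · intro i hi
      have hfl := Finset.mem_filter.mp hi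
      have hiS := hfl.1
      have hji := hfl.2.1
      have hne := hfl.2.2
      set m := (S.filter fun m => i < m).min' hne with hm
      have hmmem := Finset.min'_mem _ hne
      have him : i < m := (Finset.mem_filter.mp hmmem).2
      have hne2 : (S.filter fun x => x < m).Nonempty := ⟨i, Finset.mem_filter.mpr ⟨hiS, him⟩⟩
      rw [nxtF, dif_pos hne, prvF, ← hm, dif_pos hne2]
      have hle1 : i ≤ (S.filter fun x => x < m).max' hne2 :=
        Finset.le_max' (S.filter fun x => x < m) i (Finset.mem_filter.mpr (by exact ⟨hiS, him⟩))
      have hmax := Finset.max'_mem _ hne2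
      have hle2 : (S.filter fun x => x < m).max' hne2 ≤ i := by
        by_contra hc
        push_neg at hc
        have : m ≤ (S.filter fun x => x < m).max' hne2 :=
          Finset.min'_le (S.filter fun x => i < x) ((S.filter fun x => x < m).max' hne2)
            (Finset.mem_filter.mpr (by exact ⟨(Finset.mem_filter.mp hmax).1, hc⟩))
        exact absurd (lt_of_le_of_lt this (Finset.mem_filter.mp hmax).2) (lt_irrefl m)
      exact le_antisymm hle2 hle1
    · intro m hm
      obtain ⟨hmS, hjm⟩ := Finset.mem_filter.mp hm
      have hne : (S.filter fun i => i < m).Nonempty := ⟨j, Finset.mem_filter.mpr ⟨hj, hjm⟩⟩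
      set i := (S.filter fun i => i < m).max' hne with hi
      have himem := Finset.max'_mem _ hne
      have him : i < m := (Finset.mem_filter.mp himem).2
      have hne2 : (S.filter fun x => i < x).Nonempty := ⟨m, Finset.mem_filter.mpr ⟨hmS, him⟩⟩
      rw [prvF, dif_pos hne, ← hi, nxtF, dif_pos hne2]
      have hle1 : (S.filter fun x => i < x).min' hne2 ≤ m :=
        Finset.min'_le (S.filter fun x => i < x) m (Finset.mem_filter.mpr (by exact ⟨hmS, him⟩))
      have hmin := Finset.min'_mem _ hne2
      have hle2 : m ≤ (S.filter fun x => i < x).min' hne2 := by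
        by_contra hc
        push_neg at hc
        have : (S.filter fun x => i < x).min' hne2 ≤ i :=
          Finset.le_max' (S.filter fun x => x < m) ((S.filter fun x => i < x).min' hne2)
            (Finset.mem_filter.mpr (by exact ⟨(Finset.mem_filter.mp hmin).1, hc⟩))
        exact absurd (lt_of_le_of_lt this (Finset.mem_filter.mp hmin).2) (lt_irrefl _)
      exact le_antisymm hle1 hle2
    · intro i hi
      rfl
  rw [hA1, hA2, add_sub_cancel_right]
end Tele

section Chunk2
variable {U V : Fin n → Matrix (Fin d) (Fin d) ℝ}

lemma LamS_transpose (hA : Assumption2 n d U V) (S : Finset (Fin n)) (i : Fin n) :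
    (LamS U V S i)ᵀ = LamS U V S i := by
  rw [LamS]
  by_cases h : (S.filter fun j => i < j).Nonempty
  · rw [dif_pos h, BLamMid]
    set j' := (S.filter fun j => i < j).min' h with hj'
    have hlt : i < j' := (Finset.mem_filter.mp (Finset.min'_mem _ h)).2
    have hB : ((U i * (V i)ᵀ - U i * (U j')⁻¹ * V j' * (U i)ᵀ)⁻¹)ᵀ
        = (U i * (V i)ᵀ - U i * (U j')⁻¹ * V j' * (U i)ᵀ)⁻¹ := by
      rw [Matrix.transpose_nonsing_inv]
      congr 1
      exact (hA.2 i j' hlt).isHermitian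
    rw [Matrix.transpose_mul, Matrix.transpose_mul, Matrix.transpose_transpose, hB]
    simp only [Matrix.mul_assoc]
  · rw [dif_neg h, BLamEnd]
    have hB : ((U i * (V i)ᵀ)⁻¹)ᵀ = (U i * (V i)ᵀ)⁻¹ := by
      rw [Matrix.transpose_nonsing_inv]
      congr 1
      exact (hA.1 i).isHermitian
    rw [Matrix.transpose_mul, Matrix.transpose_mul, Matrix.transpose_transpose, hB]
    simp only [Matrix.mul_assoc]

lemma Lmat_transpose (hA : Assumption2 n d U V) (S : Finset (Fin n)) :
    (Lmat U V S)ᵀ = Lmat U V S := by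
  rw [Lmat, Matrix.transpose_sum]
  exact Finset.sum_congr rfl fun i _ => LamS_transpose hA S i

lemma LamS_posSemidef (hA : Assumption2 n d U V) (S : Finset (Fin n)) (i : Fin n) :
    (LamS U V S i).PosSemidef := by
  rw [LamS]
  by_cases h : (S.filter fun j => i < j).Nonempty
  · rw [dif_pos h, BLamMid]
    set j' := (S.filter fun j => i < j).min' h with hj'
    have hlt : i < j' := (Finset.mem_filter.mp (Finset.min'_mem _ h)).2
    have hB := ((hA.2 i j' hlt).inv).posSemidef
    have := hB.mul_mul_conjTranspose_same (Emat n d i - Emat n d j' * ((U j')ᵀ)⁻¹ * (U i)ᵀ)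
    simpa using this
  · rw [dif_neg h, BLamEnd]
    have hB := ((hA.1 i).inv).posSemidef
    have := hB.mul_mul_conjTranspose_same (Emat n d i)
    simpa using this

lemma Lmat_posSemidef (hA : Assumption2 n d U V) (S : Finset (Fin n)) :
    (Lmat U V S).PosSemidef := by
  rw [Lmat]
  refine Finset.sum_induction _ _ (fun a b ha hb => ha.add hb) ?_ ?_
  · exact Matrix.PosSemidef.zero
  · exact fun i _ => LamS_posSemidef hA S i

lemma LamS_row (S : Finset (Fin n)) {i : Fin n} (hi : i ∈ S) {p : Fin n × Fin d}
    (hp : p.1 ∉ S) (q : Fin n × Fin d) : LamS U V S i p q = 0 := by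
  have hpi : p.1 ≠ i := fun h => hp (h ▸ hi)
  rw [LamS]
  by_cases h : (S.filter fun j => i < j).Nonempty
  · rw [dif_pos h, BLamMid]
    set j' := (S.filter fun j => i < j).min' h with hj'
    have hj'S : j' ∈ S := (Finset.mem_filter.mp (Finset.min'_mem _ h)).1
    have hpj' : p.1 ≠ j' := fun hq => hp (hq ▸ hj'S)
    simp only [Matrix.sub_mul, Matrix.mul_assoc, Matrix.sub_apply]
    rw [smul_Emat, smul_Emat, if_neg hpi, if_neg hpj', sub_zero]
  · rw [dif_neg h, BLamEnd, Matrix.mul_assoc, smul_Emat, if_neg hpi]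

lemma Lmat_mulVec_row (S : Finset (Fin n)) (v : Fin n × Fin d → ℝ) {p : Fin n × Fin d}
    (hp : p.1 ∉ S) : (Lmat U V S *ᵥ v) p = 0 := by
  rw [Matrix.mulVec]
  have h0 : ∀ q, Lmat U V S p q = 0 := by
    intro q
    rw [Lmat, Matrix.sum_apply]
    exact Finset.sum_eq_zero fun i hi => LamS_row S hi hp q
  simp [dotProduct, h0]

lemma blockQ_transpose (hA : Assumption2 n d U V) :
    (blockQ n d U V)ᵀ = blockQ n d U V := by
  ext p q
  simp only [Matrix.transpose_apply, blockQ, Matrix.of_apply]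
  rcases lt_trichotomy p.1 q.1 with h | h | h
  · rw [if_neg (not_le.mpr h), if_pos (le_of_lt h)]
    rw [show V q.1 * (U p.1)ᵀ = (U p.1 * (V q.1)ᵀ)ᵀ by
      rw [Matrix.transpose_mul, Matrix.transpose_transpose]]
    rw [Matrix.transpose_apply]
  · rw [if_pos (le_of_eq h.symm), if_pos (le_of_eq h)]
    have hh := (hA.1 q.1).isHermitian
    have h2 : ∀ a b, (U q.1 * (V q.1)ᵀ) a b = (U q.1 * (V q.1)ᵀ) b a := by
      intro a b
      conv_lhs => rw [← hh]
      simp [Matrix.conjTranspose_apply]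
    rw [h]
    exact h2 q.2 p.2
  · rw [if_pos (le_of_lt h), if_neg (not_le.mpr h)]
    rw [show U q.1 * (V p.1)ᵀ = (V p.1 * (U q.1)ᵀ)ᵀ by
      rw [Matrix.transpose_mul, Matrix.transpose_transpose]]
    rw [Matrix.transpose_apply]

lemma symm_dot {N : ℕ} {M : Matrix (Fin N) (Fin N) ℝ} (hM : Mᵀ = M) (v w : Fin N → ℝ) :
    v ⬝ᵥ (M *ᵥ w) = (M *ᵥ v) ⬝ᵥ w := by
  rw [Matrix.dotProduct_mulVec, ← Matrix.mulVec_transpose, hM]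

lemma symm_dot' {A : Type*} [Fintype A] {M : Matrix A A ℝ} (hM : Mᵀ = M) (v w : A → ℝ) :
    v ⬝ᵥ (M *ᵥ w) = (M *ᵥ v) ⬝ᵥ w := by
  rw [Matrix.dotProduct_mulVec, ← Matrix.mulVec_transpose, hM]

lemma x_decomp (S : Finset (Fin n)) (x : Fin n × Fin d → ℝ)
    (hx : ∀ p : Fin n × Fin d, p.1 ∉ S → x p = 0) :
    ∑ j ∈ S, Emat n d j *ᵥ (fun b => x (j, b)) = x := by
  funext p
  rw [Finset.sum_apply]
  have hterm : ∀ j, (Emat n d j *ᵥ (fun b => x (j, b))) p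
      = if p.1 = j then x (p.1, p.2) else 0 := by
    intro j
    rw [Matrix.mulVec]
    simp only [Emat, Matrix.of_apply, dotProduct, ite_and]
    by_cases h : p.1 = j
    · simp [h]
    · simp [h]
  rw [Finset.sum_congr rfl fun j _ => hterm j]
  by_cases h : p.1 ∈ S
  · rw [Finset.sum_ite_eq S p.1 (fun _ => x (p.1, p.2)), if_pos h]
  · rw [Finset.sum_ite_eq S p.1 (fun _ => x (p.1, p.2)), if_neg h]
    exact (hx p h).symm

lemma sum_mulVec' {ι : Type*} (s : Finset ι) {A B : Type*} [Fintype A] [Fintype B]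
    (M : ι → Matrix A B ℝ) (v : B → ℝ) :
    (∑ i ∈ s, M i) *ᵥ v = ∑ i ∈ s, M i *ᵥ v := by
  funext p
  rw [Finset.sum_apply, Matrix.mulVec, dotProduct]
  simp only [Matrix.sum_apply, Finset.sum_mul]
  rw [Finset.sum_comm]
  exact Finset.sum_congr rfl fun i _ => rfl

lemma mulVec_sumv {ι : Type*} (s : Finset ι) {A B : Type*} [Fintype A] [Fintype B]
    (M : Matrix A B ℝ) (v : ι → B → ℝ) :
    M *ᵥ (∑ i ∈ s, v i) = ∑ i ∈ s, M *ᵥ v i := by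
  funext p
  rw [Finset.sum_apply, Matrix.mulVec, dotProduct]
  simp only [Finset.sum_apply, Finset.mul_sum]
  rw [Finset.sum_comm]
  exact Finset.sum_congr rfl fun i _ => rfl

lemma LQ_x (hA : Assumption2 n d U V) (S : Finset (Fin n)) (x : Fin n × Fin d → ℝ)
    (hx : ∀ p : Fin n × Fin d, p.1 ∉ S → x p = 0) :
    Lmat U V S *ᵥ (blockQ n d U V *ᵥ x) = x := by
  conv_lhs => rw [← x_decomp S x hx]
  rw [mulVec_sumv, mulVec_sumv]
  conv_rhs => rw [← x_decomp S x hx]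
  refine Finset.sum_congr rfl fun j hj => ?_
  rw [Matrix.mulVec_mulVec, Matrix.mulVec_mulVec, LQ_E hA hj]
end Chunk2

section Chunk3
variable {U V : Fin n → Matrix (Fin d) (Fin d) ℝ}

lemma dot_sum {ι : Type*} (s : Finset ι) {A : Type*} [Fintype A]
    (a : A → ℝ) (v : ι → A → ℝ) :
    a ⬝ᵥ (∑ i ∈ s, v i) = ∑ i ∈ s, a ⬝ᵥ v i := by
  simp only [dotProduct, Finset.sum_apply, Finset.mul_sum]
  rw [Finset.sum_comm]

lemma subsetCost_eq (a : Fin n × Fin d → ℝ) (c : Fin n → ℝ) (S : Finset (Fin n)) :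
    subsetCost n d U V a c S
      = (∑ i ∈ S, c i) - (1 / 4) * (a ⬝ᵥ (Lmat U V S *ᵥ a)) := by
  rw [subsetCost, Lmat, sum_mulVec', dot_sum, Finset.mul_sum, ← Finset.sum_sub_distrib]
  refine Finset.sum_congr rfl fun i hi => ?_
  rw [LamS]
  by_cases h : (S.filter fun j => i < j).Nonempty
  · rw [dif_pos h, dif_pos h]
  · rw [dif_neg h, dif_neg h]

lemma quad_val (hA : Assumption2 n d U V) (S : Finset (Fin n)) (a : Fin n × Fin d → ℝ) :
    ((-(1/2) : ℝ) • (Lmat U V S *ᵥ a)) ⬝ᵥ (blockQ n d U V *ᵥ ((-(1/2) : ℝ) • (Lmat U V S *ᵥ a)))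
      + a ⬝ᵥ ((-(1/2) : ℝ) • (Lmat U V S *ᵥ a))
      = -(1/4) * (a ⬝ᵥ (Lmat U V S *ᵥ a)) := by
  set L := Lmat U V S with hL
  set Q := blockQ n d U V with hQ
  set w := L *ᵥ a with hw
  have hLs : Lᵀ = L := Lmat_transpose hA S
  have hwsupp : ∀ p : Fin n × Fin d, p.1 ∉ S → w p = 0 := fun p hp => Lmat_mulVec_row S a hp
  have kwQ : L *ᵥ (Q *ᵥ w) = w := LQ_x hA S w hwsupp
  have kaw : a ⬝ᵥ w = w ⬝ᵥ (Q *ᵥ w) := by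
    calc a ⬝ᵥ w = a ⬝ᵥ (L *ᵥ (Q *ᵥ w)) := by rw [kwQ]
    _ = (L *ᵥ a) ⬝ᵥ (Q *ᵥ w) := symm_dot' hLs a _
    _ = w ⬝ᵥ (Q *ᵥ w) := by rw [← hw]
  rw [Matrix.mulVec_smul, smul_dotProduct, dotProduct_smul, dotProduct_smul, ← kaw]
  simp only [smul_eq_mul]
  ring

lemma quad_lower (hA : Assumption2 n d U V) (S : Finset (Fin n)) (a : Fin n × Fin d → ℝ)
    (x : Fin n × Fin d → ℝ) (hx : ∀ p : Fin n × Fin d, p.1 ∉ S → x p = 0) :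
    -(1/4) * (a ⬝ᵥ (Lmat U V S *ᵥ a)) ≤ x ⬝ᵥ (blockQ n d U V *ᵥ x) + a ⬝ᵥ x := by
  set L := Lmat U V S with hL
  set Q := blockQ n d U V with hQ
  set w := L *ᵥ a with hw
  have hLs : Lᵀ = L := Lmat_transpose hA S
  have hQs : Qᵀ = Q := blockQ_transpose hA
  have hwsupp : ∀ p : Fin n × Fin d, p.1 ∉ S → w p = 0 := fun p hp => Lmat_mulVec_row S a hp
  set xs : Fin n × Fin d → ℝ := (-(1/2) : ℝ) • w with hxs
  set hv : Fin n × Fin d → ℝ := x - xs with hhv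
  have hhsupp : ∀ p : Fin n × Fin d, p.1 ∉ S → hv p = 0 := by
    intro p hp
    simp [hhv, hxs, hx p hp, hwsupp p hp]
  have khQ : L *ᵥ (Q *ᵥ hv) = hv := LQ_x hA S hv hhsupp
  have kwQ : L *ᵥ (Q *ᵥ w) = w := LQ_x hA S w hwsupp
  have cross : hv ⬝ᵥ (Q *ᵥ w) = a ⬝ᵥ hv := by
    calc hv ⬝ᵥ (Q *ᵥ w) = (Q *ᵥ hv) ⬝ᵥ w := symm_dot' hQs hv w
    _ = w ⬝ᵥ (Q *ᵥ hv) := dotProduct_comm _ _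
    _ = (L *ᵥ a) ⬝ᵥ (Q *ᵥ hv) := by rw [← hw]
    _ = a ⬝ᵥ (L *ᵥ (Q *ᵥ hv)) := (symm_dot' hLs a _).symm
    _ = a ⬝ᵥ hv := by rw [khQ]
  have hnn : 0 ≤ hv ⬝ᵥ (Q *ᵥ hv) := by
    have h1 : hv ⬝ᵥ (Q *ᵥ hv) = (Q *ᵥ hv) ⬝ᵥ (L *ᵥ (Q *ᵥ hv)) := by
      nth_rewrite 1 [← khQ]
      exact dotProduct_comm _ _
    have h2 := (Lmat_posSemidef hA S).dotProduct_mulVec_nonneg (Q *ᵥ hv)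
    rw [h1]
    simpa using h2
  have hxeq : x = xs + hv := by
    funext p
    simp [hhv]
  have hval := quad_val hA S a
  rw [← hxs] at hval
  have crossxs : hv ⬝ᵥ (Q *ᵥ xs) = -(1/2) * (a ⬝ᵥ hv) := by
    rw [hxs, Matrix.mulVec_smul, dotProduct_smul, smul_eq_mul, cross]
  have crossxs2 : xs ⬝ᵥ (Q *ᵥ hv) = -(1/2) * (a ⬝ᵥ hv) := by
    calc xs ⬝ᵥ (Q *ᵥ hv) = (Q *ᵥ xs) ⬝ᵥ hv := symm_dot' hQs xs hv
    _ = hv ⬝ᵥ (Q *ᵥ xs) := dotProduct_comm _ _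
    _ = -(1/2) * (a ⬝ᵥ hv) := crossxs
  have expand : x ⬝ᵥ (Q *ᵥ x) + a ⬝ᵥ x
      = (xs ⬝ᵥ (Q *ᵥ xs) + a ⬝ᵥ xs) + hv ⬝ᵥ (Q *ᵥ hv)
        + (xs ⬝ᵥ (Q *ᵥ hv) + hv ⬝ᵥ (Q *ᵥ xs) + a ⬝ᵥ hv) := by
    rw [hxeq]
    simp only [Matrix.mulVec_add, add_dotProduct, dotProduct_add]
    ring
  rw [expand, hval, crossxs, crossxs2]
  linarith
end Chunk3


theorem stmt_15 (n d : ℕ) (hn : 1 ≤ n) (hd : 1 ≤ d)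
    (U V : Fin n → Matrix (Fin d) (Fin d) ℝ) (hA : Assumption2 n d U V)
    (a : Fin n × Fin d → ℝ) (c : Fin n → ℝ) :
    ∃ m : ℝ,
      IsLeast
        {y : ℝ | ∃ (x : Fin n × Fin d → ℝ) (z : Fin n → ℝ),
          (∀ i : Fin n, z i = 0 ∨ z i = 1) ∧
          (∀ i : Fin n, z i = 0 → ∀ b : Fin d, x (i, b) = 0) ∧
          y = x ⬝ᵥ (blockQ n d U V *ᵥ x) + a ⬝ᵥ x + ∑ i : Fin n, c i * z i} m ∧
      IsLeast {y : ℝ | ∃ S : Finset (Fin n), y = subsetCost n d U V a c S} m := by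
  classical
  obtain ⟨S0, -, hS0min⟩ := Finset.exists_min_image (Finset.univ : Finset (Finset (Fin n)))
    (subsetCost n d U V a c) ⟨∅, Finset.mem_univ ∅⟩
  refine ⟨subsetCost n d U V a c S0, ⟨?_, ?_⟩, ⟨⟨S0, rfl⟩, ?_⟩⟩
  · -- membership in the first set
    refine ⟨(-(1/2) : ℝ) • (Lmat U V S0 *ᵥ a), fun i => if i ∈ S0 then 1 else 0, ?_, ?_, ?_⟩
    · intro i; by_cases h : i ∈ S0 <;> simp [h]
    · intro i hzi b
      have hiS : i ∉ S0 := by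
        intro hmem
        have hzi' : (if i ∈ S0 then (1 : ℝ) else 0) = 0 := hzi
        rw [if_pos hmem] at hzi'
        norm_num at hzi'
      have h0 := Lmat_mulVec_row (U := U) (V := V) S0 a (p := (i, b)) hiS
      simp [h0]
    · have hval := quad_val hA S0 a
      have hz : ∑ i : Fin n, c i * (if i ∈ S0 then (1 : ℝ) else 0) = ∑ i ∈ S0, c i := by
        simp only [mul_ite, mul_one, mul_zero]
        rw [Finset.sum_ite_mem, Finset.univ_inter]
      rw [hval, hz, subsetCost_eq]
      ring
  · -- lower bound for the first set
    rintro y ⟨x, z, hz01, hzx, rfl⟩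
    set S := Finset.univ.filter (fun i => z i = 1) with hS
    have hxsupp : ∀ p : Fin n × Fin d, p.1 ∉ S → x p = 0 := by
      intro p hp
      have hz0 : z p.1 = 0 := by
        rcases hz01 p.1 with h | h
        · exact h
        · refine absurd ?_ hp
          rw [hS]
          exact Finset.mem_filter.mpr ⟨Finset.mem_univ _, h⟩
      have := hzx p.1 hz0 p.2
      simpa using this
    have hzsum : ∑ i : Fin n, c i * z i = ∑ i ∈ S, c i := by
      rw [hS]
      refine (Finset.sum_congr rfl ?_).trans (Finset.sum_filter _ _).symm
      intro i _
      rcases hz01 i with h | h <;> simp [h]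
    have hlow := quad_lower hA S a x hxsupp
    have hmin := hS0min S (Finset.mem_univ S)
    rw [hzsum]
    have hSeq := subsetCost_eq (U := U) (V := V) a c S
    linarith
  · rintro y ⟨S, rfl⟩
    exact hS0min S (Finset.mem_univ S)
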